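/- Let n ≥ 2 and let U : ℂ × ℂ^{n−1} → U(n−1) be a map into the unitary group such that U(w,ζ) = I whenever ‖ζ‖ ≤ 0.1 (for all w ∈ ℂ). Then the commutator ν = Ψ⁻¹ ∘ Φ⁻¹ ∘ Ψ ∘ Φ is the identity on the region where ‖z₁‖ < 0.1 or ‖z₂‖ < 0.1: ν((x,z₁),(y,z₂)) = ((x,z₁),(y,z₂)) for all such points. -/

import Mathlib

open Matrix

/-- The space `ℂ × ℂ^{n-1}` of pairs `(x, z)`. -/
abbrev CPt (n : ℕ) := ℂ × EuclideanSpace ℂ (Fin (n - 1))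

/-- `Φ ((x,z₁),(y,z₂)) = ((x,z₁), (y, U(x,z₁) z₂))` for a map
`U : ℂ × ℂ^{n-1} → U(n-1)`. -/
noncomputable def PhiC (n : ℕ)
    (U : CPt n → Matrix.unitaryGroup (Fin (n - 1)) ℂ) :
    (CPt n × CPt n) → (CPt n × CPt n) :=
  fun p => (p.1, (p.2.1, WithLp.toLp 2 ((U p.1 : Matrix (Fin (n - 1)) (Fin (n - 1)) ℂ).mulVec p.2.2)))

/-- `Ψ ((x,z₁),(y,z₂)) = ((x, U(y,z₂) z₁), (y, z₂))`. -/
noncomputable def PsiC (n : ℕ)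
    (U : CPt n → Matrix.unitaryGroup (Fin (n - 1)) ℂ) :
    (CPt n × CPt n) → (CPt n × CPt n) :=
  fun p => ((p.1.1, WithLp.toLp 2 ((U p.2 : Matrix (Fin (n - 1)) (Fin (n - 1)) ℂ).mulVec p.1.2)), p.2)

/-- The inverse of `Φ`, obtained by replacing `U(·)` by `U(·)⁻¹`. -/
noncomputable def PhiCInv (n : ℕ)
    (U : CPt n → Matrix.unitaryGroup (Fin (n - 1)) ℂ) :
    (CPt n × CPt n) → (CPt n × CPt n) :=
  fun p => (p.1, (p.2.1, WithLp.toLp 2 (((U p.1)⁻¹ : Matrix (Fin (n - 1)) (Fin (n - 1)) ℂ).mulVec p.2.2)))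

/-- The inverse of `Ψ`, obtained by replacing `U(·)` by `U(·)⁻¹`. -/
noncomputable def PsiCInv (n : ℕ)
    (U : CPt n → Matrix.unitaryGroup (Fin (n - 1)) ℂ) :
    (CPt n × CPt n) → (CPt n × CPt n) :=
  fun p => ((p.1.1, WithLp.toLp 2 (((U p.2)⁻¹ : Matrix (Fin (n - 1)) (Fin (n - 1)) ℂ).mulVec p.1.2)), p.2)

/-- The commutator `ν = Ψ⁻¹ ∘ Φ⁻¹ ∘ Ψ ∘ Φ`. -/
noncomputable def nuC (n : ℕ)
    (U : CPt n → Matrix.unitaryGroup (Fin (n - 1)) ℂ) :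
    (CPt n × CPt n) → (CPt n × CPt n) :=
  PsiCInv n U ∘ PhiCInv n U ∘ PsiC n U ∘ PhiC n U

lemma norm_mulVec_unitary {m : Type*} [Fintype m] [DecidableEq m]
    (A : Matrix.unitaryGroup m ℂ) (v : EuclideanSpace ℂ m) :
    ‖((WithLp.equiv 2 (m → ℂ)).symm ((A : Matrix m m ℂ).mulVec (WithLp.equiv 2 (m → ℂ) v)))‖ = ‖v‖ := by
  set w := (WithLp.equiv 2 (m → ℂ)).symm ((A : Matrix m m ℂ).mulVec (WithLp.equiv 2 (m → ℂ) v)) with hw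
  have key : (inner ℂ w w : ℂ) = inner ℂ v v := by
    rw [hw, EuclideanSpace.inner_eq_star_dotProduct, EuclideanSpace.inner_eq_star_dotProduct,
      dotProduct_comm, dotProduct_comm (WithLp.ofLp v)]
    show star ((A : Matrix m m ℂ) *ᵥ WithLp.ofLp v) ⬝ᵥ ((A : Matrix m m ℂ) *ᵥ WithLp.ofLp v) = _
    rw [
      Matrix.star_mulVec, Matrix.dotProduct_mulVec, Matrix.vecMul_vecMul,
      (show (A : Matrix m m ℂ)ᴴ * A = 1 from Matrix.UnitaryGroup.star_mul_self A), Matrix.vecMul_one]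
  have h1 := @inner_self_eq_norm_sq_to_K ℂ _ _ _ _ w
  have h2 := @inner_self_eq_norm_sq_to_K ℂ _ _ _ _ v
  rw [h1, h2] at key
  have : (‖w‖ : ℝ) ^ 2 = ‖v‖ ^ 2 := by exact_mod_cast key
  nlinarith [norm_nonneg w, norm_nonneg v]

/-- Let `n ≥ 2` and `U : ℂ × ℂ^{n-1} → U(n-1)` be a map into the unitary group
with `U(w, ζ) = I` whenever `‖ζ‖ ≤ 0.1`. Then the commutator
`ν = Ψ⁻¹ ∘ Φ⁻¹ ∘ Ψ ∘ Φ` is the identity on the region where `‖z₁‖ < 0.1` or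
`‖z₂‖ < 0.1`. -/
theorem statement14 (n : ℕ) (hn : 2 ≤ n)
    (U : CPt n → Matrix.unitaryGroup (Fin (n - 1)) ℂ)
    (hU : ∀ (w : ℂ) (ζ : EuclideanSpace ℂ (Fin (n - 1))), ‖ζ‖ ≤ 0.1 → U (w, ζ) = 1)
    (x y : ℂ) (z₁ z₂ : EuclideanSpace ℂ (Fin (n - 1)))
    (hz : ‖z₁‖ < 0.1 ∨ ‖z₂‖ < 0.1) :
    nuC n U ((x, z₁), (y, z₂)) = ((x, z₁), (y, z₂)) := by
  have hinv : ∀ B : Matrix.unitaryGroup (Fin (n-1)) ℂ,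
      ((B : Matrix (Fin (n-1)) (Fin (n-1)) ℂ))⁻¹ = star (B : Matrix (Fin (n-1)) (Fin (n-1)) ℂ) :=
    fun B => Matrix.inv_eq_left_inv (Matrix.UnitaryGroup.star_mul_self B)
  obtain h1 | h2 := hz
  · have hU1 : U (x, z₁) = 1 := hU x z₁ h1.le
    set A := U (y, z₂) with hA
    have hU2 : U (x, (WithLp.toLp 2 ((A : Matrix (Fin (n-1)) (Fin (n-1)) ℂ).mulVec z₁) :
        EuclideanSpace ℂ (Fin (n-1)))) = 1 := by
      apply hU
      show ‖(WithLp.equiv 2 (Fin (n-1) → ℂ)).symm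
          ((A : Matrix (Fin (n-1)) (Fin (n-1)) ℂ).mulVec
            (WithLp.equiv 2 (Fin (n-1) → ℂ) z₁))‖ ≤ 0.1
      rw [norm_mulVec_unitary A z₁]; exact h1.le
    simp only [nuC, Function.comp, PhiC, PsiC, PhiCInv, PsiCInv, hU1, ← hA,
      Matrix.UnitaryGroup.one_val, Matrix.one_mulVec, hU2, hinv, inv_one,
      Matrix.mulVec_mulVec, Matrix.UnitaryGroup.star_mul_self, star_one, WithLp.ofLp_toLp, WithLp.toLp_ofLp]
  · have hU1 : U (y, z₂) = 1 := hU y z₂ h2.le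
    set A := U (x, z₁) with hA
    have hU2 : U (y, (WithLp.toLp 2 ((A : Matrix (Fin (n-1)) (Fin (n-1)) ℂ).mulVec z₂) :
        EuclideanSpace ℂ (Fin (n-1)))) = 1 := by
      apply hU
      show ‖(WithLp.equiv 2 (Fin (n-1) → ℂ)).symm
          ((A : Matrix (Fin (n-1)) (Fin (n-1)) ℂ).mulVec
            (WithLp.equiv 2 (Fin (n-1) → ℂ) z₂))‖ ≤ 0.1
      rw [norm_mulVec_unitary A z₂]; exact h2.le
    simp only [nuC, Function.comp, PhiC, PsiC, PhiCInv, PsiCInv, ← hA, hU2, hinv,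
      Matrix.UnitaryGroup.one_val, Matrix.one_mulVec, inv_one,
      Matrix.mulVec_mulVec, Matrix.UnitaryGroup.star_mul_self, star_one, hU1, WithLp.ofLp_toLp, WithLp.toLp_ofLp]
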